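/- Let X be a compact metric space and Γ : C(X) → ℝ a pressure function. Then there exists a residual (comeagre) subset ℜ of C(X) such that for every φ ∈ ℜ the set ℰ_φ(Γ) of equilibrium states of φ is a singleton. -/

import Mathlib

open MeasureTheory

/-- A pressure function on `C(X,ℝ)`: monotone, translation invariant and convex. -/
def IsPressureFunction {X : Type*} [TopologicalSpace X] [CompactSpace X]
    (Γ : C(X, ℝ) → ℝ) : Prop :=
  (∀ φ ψ : C(X, ℝ), (∀ x, φ x ≤ ψ x) → Γ φ ≤ Γ ψ) ∧
  (∀ (φ : C(X, ℝ)) (c : ℝ), Γ (φ + ContinuousMap.const X c) = Γ φ + c) ∧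
  ConvexOn ℝ Set.univ Γ

/-- The entropy-like map `𝔥(μ) = inf { ∫ φ dμ : φ ∈ C(X), Γ(−φ) ≤ 0 }`, valued in `EReal`
(so that the value `−∞` is allowed). -/
noncomputable def entropyLike {X : Type*} [TopologicalSpace X] [CompactSpace X]
    [MeasurableSpace X] (Γ : C(X, ℝ) → ℝ) (μ : ProbabilityMeasure X) : EReal :=
  sInf { r : EReal | ∃ φ : C(X, ℝ), Γ (-φ) ≤ 0 ∧
    r = ((∫ x, φ x ∂(μ : Measure X) : ℝ) : EReal) }

set_option linter.unusedSectionVars false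
set_option linter.unusedVariables false
set_option linter.unnecessarySeqFocus false
set_option maxHeartbeats 1000000

namespace GUE
open scoped ENNReal NNReal
open Topology
variable {X : Type*} [MetricSpace X] [CompactSpace X] [Nonempty X]
variable (Γ : C(X, ℝ) → ℝ)

noncomputable def slope (φ v : C(X, ℝ)) (δ : ℝ) : ℝ := (Γ (φ + δ • v) - Γ φ) / δ

noncomputable def dplus (φ v : C(X, ℝ)) : ℝ := sInf (slope Γ φ v '' Set.Ioi 0)

def good (v : C(X, ℝ)) (ε : ℝ) : Set C(X, ℝ) :=
  {φ | ∃ δ : ℝ, 0 < δ ∧ Γ (φ + δ • v) + Γ (φ - δ • v) - 2 * Γ φ < ε * δ}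

variable {Γ}
variable (hm : ∀ φ ψ : C(X, ℝ), (∀ x, φ x ≤ ψ x) → Γ φ ≤ Γ ψ)
  (ht : ∀ (φ : C(X, ℝ)) (c : ℝ), Γ (φ + ContinuousMap.const X c) = Γ φ + c)
  (hc : ConvexOn ℝ Set.univ Γ)

include hm ht in
theorem gamma_lip (φ ψ : C(X, ℝ)) : Γ φ - Γ ψ ≤ ‖φ - ψ‖ := by
  have h1 : Γ φ ≤ Γ (ψ + ContinuousMap.const X ‖φ - ψ‖) := by
    apply hm
    intro x
    have h2 := (φ - ψ).norm_coe_le_norm x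
    rw [ContinuousMap.sub_apply, Real.norm_eq_abs] at h2
    have h3 : φ x - ψ x ≤ ‖φ - ψ‖ := (le_abs_self _).trans h2
    simpa using by linarith
  rw [ht] at h1; linarith

include hm ht in
theorem gamma_lip_abs (φ ψ : C(X, ℝ)) : |Γ φ - Γ ψ| ≤ ‖φ - ψ‖ := by
  rw [abs_le]
  refine ⟨?_, gamma_lip hm ht φ ψ⟩
  have := gamma_lip hm ht ψ φ; rw [norm_sub_rev] at this; linarith

include hm ht in
theorem gamma_cont : Continuous Γ := by
  refine (LipschitzWith.of_dist_le_mul (K := 1) fun a b => ?_).continuous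
  rw [Real.dist_eq, dist_eq_norm, NNReal.coe_one, one_mul]
  exact gamma_lip_abs hm ht a b

include hm ht in
theorem abs_slope_le (φ v : C(X, ℝ)) {δ : ℝ} (hδ : 0 < δ) : |slope Γ φ v δ| ≤ ‖v‖ := by
  rw [slope, abs_div, abs_of_pos hδ, div_le_iff₀ hδ]
  have h := gamma_lip_abs hm ht (φ + δ • v) φ
  have h2 : ‖(φ + δ • v) - φ‖ = δ * ‖v‖ := by
    rw [add_sub_cancel_left, norm_smul δ v, Real.norm_eq_abs, abs_of_pos hδ]
  rw [h2] at h; linarith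

include hc in
theorem slope_mono (φ v : C(X, ℝ)) {δ₁ δ₂ : ℝ} (h1 : 0 < δ₁) (h12 : δ₁ ≤ δ₂) :
    slope Γ φ v δ₁ ≤ slope Γ φ v δ₂ := by
  rcases eq_or_lt_of_le h12 with rfl | hlt
  · exact le_refl _
  have h2 : (0:ℝ) < δ₂ := h1.trans hlt
  set t : ℝ := δ₁ / δ₂ with hts
  have htpos : 0 < t := div_pos h1 h2
  have htle : t ≤ 1 := (div_le_one h2).2 h12
  have key := hc.2 (Set.mem_univ φ) (Set.mem_univ (φ + δ₂ • v)) (by linarith : (0:ℝ) ≤ 1 - t)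
    htpos.le (by ring)
  have hcomb : (1 - t) • φ + t • (φ + δ₂ • v) = φ + δ₁ • v := by
    have : t * δ₂ = δ₁ := div_mul_cancel₀ _ h2.ne'
    rw [smul_add, smul_smul, this]
    module
  rw [hcomb] at key
  simp only [smul_eq_mul] at key
  rw [slope, slope, div_le_div_iff₀ h1 h2]
  have : Γ (φ + δ₁ • v) - Γ φ ≤ t * (Γ (φ + δ₂ • v) - Γ φ) := by linarith [key]
  calc (Γ (φ + δ₁ • v) - Γ φ) * δ₂ ≤ t * (Γ (φ + δ₂ • v) - Γ φ) * δ₂ := by nlinarith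
    _ = (Γ (φ + δ₂ • v) - Γ φ) * δ₁ := by
      have htd : t * δ₂ = δ₁ := div_mul_cancel₀ _ h2.ne'
      linear_combination (Γ (φ + δ₂ • v) - Γ φ) * htd

theorem slope_nonempty (φ v : C(X, ℝ)) : (slope Γ φ v '' Set.Ioi 0).Nonempty :=
  ⟨_, ⟨1, by norm_num, rfl⟩⟩

include hm ht in
theorem slope_bddBelow (φ v : C(X, ℝ)) : BddBelow (slope Γ φ v '' Set.Ioi 0) := by
  refine ⟨-‖v‖, ?_⟩
  rintro r ⟨δ, hδ, rfl⟩
  have := abs_slope_le hm ht φ v hδ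
  rw [abs_le] at this; exact this.1

include hm ht in
theorem dplus_le_slope (φ v : C(X, ℝ)) {δ : ℝ} (hδ : 0 < δ) : dplus Γ φ v ≤ slope Γ φ v δ :=
  csInf_le (slope_bddBelow hm ht φ v) ⟨δ, hδ, rfl⟩

include hm ht in
theorem neg_norm_le_dplus (φ v : C(X, ℝ)) : -‖v‖ ≤ dplus Γ φ v := by
  apply le_csInf (slope_nonempty φ v)
  rintro r ⟨δ, hδ, rfl⟩
  have := abs_slope_le hm ht φ v hδ
  rw [abs_le] at this; exact this.1

include hm ht in
theorem dplus_le_norm (φ v : C(X, ℝ)) : dplus Γ φ v ≤ ‖v‖ := by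
  refine (dplus_le_slope hm ht φ v one_pos).trans ?_
  have := abs_slope_le hm ht φ v one_pos
  rw [abs_le] at this; exact this.2


include hm ht in
theorem good_isOpen (v : C(X, ℝ)) (ε : ℝ) : IsOpen (good Γ v ε) := by
  have hcont : Continuous Γ := gamma_cont hm ht
  have : good Γ v ε = ⋃ δ : ℝ, {φ | 0 < δ ∧ Γ (φ + δ • v) + Γ (φ - δ • v) - 2 * Γ φ < ε * δ} := by
    ext φ; simp [good, Set.mem_iUnion]
  rw [this]
  apply isOpen_iUnion
  intro δ
  by_cases hδ : 0 < δ
  · have : {φ : C(X,ℝ) | 0 < δ ∧ Γ (φ + δ • v) + Γ (φ - δ • v) - 2 * Γ φ < ε * δ}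
        = (fun φ => Γ (φ + δ • v) + Γ (φ - δ • v) - 2 * Γ φ) ⁻¹' (Set.Iio (ε * δ)) := by
      ext φ; simp [hδ]
    rw [this]
    apply IsOpen.preimage ?_ isOpen_Iio
    fun_prop
  · have : {φ : C(X,ℝ) | 0 < δ ∧ Γ (φ + δ • v) + Γ (φ - δ • v) - 2 * Γ φ < ε * δ} = ∅ := by
      ext φ; simp [hδ]
    rw [this]; exact isOpen_empty

include hm ht in
theorem good_dense (v : C(X, ℝ)) {ε : ℝ} (hε : 0 < ε) : Dense (good Γ v ε) := by
  rw [Metric.dense_iff]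
  intro φ0 r hr
  by_contra hcon
  rw [Set.not_nonempty_iff_eq_empty] at hcon
  -- every point of the ball fails to be good
  have hbad : ∀ ψ ∈ Metric.ball φ0 r, ∀ δ : ℝ, 0 < δ →
      ε * δ ≤ Γ (ψ + δ • v) + Γ (ψ - δ • v) - 2 * Γ ψ := by
    intro ψ hψ δ hδ
    by_contra hlt
    push_neg at hlt
    have : ψ ∈ Metric.ball φ0 r ∩ good Γ v ε := ⟨hψ, ⟨δ, hδ, hlt⟩⟩
    rw [hcon] at this; exact this
  obtain ⟨N, hN⟩ := exists_nat_gt (2 * ‖v‖ / ε)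
  have hNε : 2 * ‖v‖ < N * ε := by
    rw [div_lt_iff₀ hε] at hN; linarith
  have hN1 : (0:ℝ) < N + 1 := by positivity
  set η : ℝ := r / (2 * (‖v‖ + 1)) with hη
  have hηpos : 0 < η := by positivity
  set δ : ℝ := η / (N + 1) with hδdef
  have hδpos : 0 < δ := by positivity
  set g : ℝ → ℝ := fun s => Γ (φ0 + s • v) with hg
  set S : ℕ → ℝ := fun i => (g ((i+1) * δ) - g (i * δ)) / δ with hS
  -- points in the ball
  have hball : ∀ i : ℕ, (i : ℝ) ≤ N + 1 → φ0 + ((i : ℝ) * δ) • v ∈ Metric.ball φ0 r := by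
    intro i hi
    rw [Metric.mem_ball, dist_eq_norm, add_sub_cancel_left, norm_smul ((i:ℝ)*δ) v,
      Real.norm_eq_abs, abs_of_nonneg (by positivity)]
    have h1 : (i:ℝ) * δ ≤ η := by
      calc (i:ℝ) * δ ≤ (N+1) * δ := by
            apply mul_le_mul_of_nonneg_right hi hδpos.le
        _ = η := by rw [hδdef, mul_div_cancel₀ _ hN1.ne']
    have h2 : η * ‖v‖ < r := by
      rw [hη]
      rw [div_mul_eq_mul_div, div_lt_iff₀ (by positivity)]
      nlinarith [norm_nonneg v, hr]
    calc (i:ℝ) * δ * ‖v‖ ≤ η * ‖v‖ := by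
          apply mul_le_mul_of_nonneg_right h1 (norm_nonneg v)
      _ < r := h2
  -- step inequality
  have hstep : ∀ i : ℕ, (i : ℝ) + 1 ≤ N → S i + ε ≤ S (i+1) := by
    intro i hi
    have hmem := hball (i+1) (by push_cast; linarith)
    have key := hbad _ hmem δ hδpos
    have e1 : (φ0 + (((i:ℕ)+1 : ℕ) * δ : ℝ) • v) + δ • v = φ0 + (((i:ℝ)+1+1) * δ) • v := by
      push_cast; rw [add_assoc, ← add_smul]; ring_nf
    have e2 : (φ0 + (((i:ℕ)+1 : ℕ) * δ : ℝ) • v) - δ • v = φ0 + (((i:ℝ)) * δ) • v := by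
      push_cast; rw [add_sub_assoc, ← sub_smul]; ring_nf
    rw [e1, e2] at key
    have : ε * δ ≤ g (((i:ℝ)+1+1) * δ) + g ((i:ℝ) * δ) - 2 * g (((i:ℝ)+1) * δ) := by
      convert key using 3 <;> push_cast <;> ring_nf <;> rfl
    rw [hS]
    simp only
    rw [div_add' _ _ _ hδpos.ne', div_le_div_iff₀ hδpos hδpos]
    push_cast
    nlinarith [this]
  -- chain
  have hchain : ∀ i : ℕ, (i:ℝ) ≤ N → S 0 + i * ε ≤ S i := by
    intro i
    induction i with
    | zero => intro _; simp
    | succ n ih =>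
      intro hn
      push_cast at hn
      have h1 : (n:ℝ) ≤ N := by linarith
      have := ih h1
      have h2 := hstep n (by linarith)
      push_cast
      linarith
  have hSbound : ∀ i : ℕ, |S i| ≤ ‖v‖ := by
    intro i
    rw [hS]
    simp only
    rw [abs_div, abs_of_pos hδpos, div_le_iff₀ hδpos]
    have := gamma_lip_abs hm ht (φ0 + (((i:ℝ)+1) * δ) • v) (φ0 + ((i:ℝ) * δ) • v)
    have heq : (φ0 + (((i:ℝ)+1) * δ) • v) - (φ0 + ((i:ℝ) * δ) • v) = δ • v := by
      rw [add_sub_add_left_eq_sub, ← sub_smul]; ring_nf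
    rw [heq, norm_smul δ v, Real.norm_eq_abs, abs_of_pos hδpos] at this
    calc |g (((i:ℝ)+1) * δ) - g ((i:ℝ) * δ)| ≤ δ * ‖v‖ := this
      _ = ‖v‖ * δ := by ring
  have hfin := hchain N (le_refl _)
  have b0 := hSbound 0
  have bN := hSbound N
  rw [abs_le] at b0 bN
  nlinarith [hfin, b0.1, bN.2, hNε]


include hc in
theorem slope_pair_nonneg (φ v : C(X, ℝ)) {δ : ℝ} (hδ : 0 < δ) :
    0 ≤ slope Γ φ v δ + slope Γ φ (-v) δ := by
  have key := hc.2 (Set.mem_univ (φ + δ • v)) (Set.mem_univ (φ + δ • (-v)))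
    (by norm_num : (0:ℝ) ≤ 1/2) (by norm_num : (0:ℝ) ≤ 1/2) (by norm_num)
  have hcomb : (1/2 : ℝ) • (φ + δ • v) + (1/2 : ℝ) • (φ + δ • (-v)) = φ := by module
  rw [hcomb] at key
  simp only [smul_eq_mul] at key
  rw [slope, slope, ← add_div]
  apply div_nonneg _ hδ.le
  linarith

include hm ht hc in
theorem dplus_pair_nonneg (φ v : C(X, ℝ)) : 0 ≤ dplus Γ φ v + dplus Γ φ (-v) := by
  have h : -dplus Γ φ (-v) ≤ dplus Γ φ v := by
    apply le_csInf (slope_nonempty φ v)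
    rintro r ⟨δ, hδ, rfl⟩
    rw [neg_le]
    apply le_csInf (slope_nonempty φ (-v))
    rintro s ⟨δ', hδ', rfl⟩
    have hd : 0 < min δ δ' := lt_min hδ hδ'
    have h1 := slope_pair_nonneg hc φ v hd
    have h2 := slope_mono hc φ (-v) hd (min_le_right δ δ')
    have h3 := slope_mono hc φ v hd (min_le_left δ δ')
    linarith
  linarith

include hm ht in
theorem dplus_lip (φ v w : C(X, ℝ)) : dplus Γ φ v ≤ dplus Γ φ w + ‖v - w‖ := by
  rw [← sub_le_iff_le_add]
  apply le_csInf (slope_nonempty φ w)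
  rintro r ⟨δ, hδ, rfl⟩
  rw [sub_le_iff_le_add]
  have h1 := dplus_le_slope hm ht φ v hδ
  have hgl := gamma_lip_abs hm ht (φ + δ • v) (φ + δ • w)
  have he : (φ + δ • v) - (φ + δ • w) = δ • (v - w) := by module
  rw [he, norm_smul δ (v - w), Real.norm_eq_abs, abs_of_pos (show (0:ℝ) < δ from hδ)] at hgl
  have h2 : slope Γ φ v δ - slope Γ φ w δ ≤ ‖v - w‖ := by
    have he2 : slope Γ φ v δ - slope Γ φ w δ = (Γ (φ + δ • v) - Γ (φ + δ • w)) / δ := by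
      rw [slope, slope]; ring
    rw [he2, div_le_iff₀ hδ]
    have := (abs_le.mp hgl).2
    linarith
  linarith

-- subadditivity
include hm ht hc in
theorem dplus_subadd (φ v w : C(X, ℝ)) :
    dplus Γ φ (v + w) ≤ dplus Γ φ v + dplus Γ φ w := by
  have key : ∀ ε : ℝ, 0 < ε → dplus Γ φ (v + w) ≤ dplus Γ φ v + dplus Γ φ w + ε := by
    intro ε hε
    obtain ⟨r1, ⟨δ1, hδ1, rfl⟩, hr1⟩ := exists_lt_of_csInf_lt (slope_nonempty φ v)
      (lt_add_of_pos_right (dplus Γ φ v) (half_pos hε))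
    obtain ⟨r2, ⟨δ2, hδ2, rfl⟩, hr2⟩ := exists_lt_of_csInf_lt (slope_nonempty φ w)
      (lt_add_of_pos_right (dplus Γ φ w) (half_pos hε))
    set d : ℝ := min δ1 δ2 / 2 with hd
    have hmin : 0 < min δ1 δ2 := lt_min hδ1 hδ2
    have hdpos : 0 < d := by rw [hd]; linarith
    have hkey : slope Γ φ (v + w) d ≤ slope Γ φ v (2*d) + slope Γ φ w (2*d) := by
      have hcomb : φ + d • (v + w) = (1/2 : ℝ) • (φ + (2*d) • v) + (1/2 : ℝ) • (φ + (2*d) • w) := by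
        module
      have hcv := hc.2 (Set.mem_univ (φ + (2*d) • v)) (Set.mem_univ (φ + (2*d) • w))
        (by norm_num : (0:ℝ) ≤ 1/2) (by norm_num : (0:ℝ) ≤ 1/2) (by norm_num)
      rw [← hcomb] at hcv
      simp only [smul_eq_mul] at hcv
      rw [slope, slope, slope, ← add_div, div_le_div_iff₀ hdpos (by linarith : (0:ℝ) < 2*d)]
      nlinarith [hcv]
    have h2d1 : slope Γ φ v (2*d) ≤ slope Γ φ v δ1 :=
      slope_mono hc φ v (by linarith) (by rw [hd]; linarith [min_le_left δ1 δ2])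
    have h2d2 : slope Γ φ w (2*d) ≤ slope Γ φ w δ2 :=
      slope_mono hc φ w (by linarith) (by rw [hd]; linarith [min_le_right δ1 δ2])
    have h0 := dplus_le_slope hm ht φ (v + w) hdpos
    linarith
  by_contra hlt
  push_neg at hlt
  have := key ((dplus Γ φ (v + w) - (dplus Γ φ v + dplus Γ φ w))/2) (by linarith)
  linarith

-- scalar multiplication, positive case
include hm ht hc in
theorem dplus_smul_pos (φ v : C(X, ℝ)) {c : ℝ} (hcpos : 0 < c) :
    dplus Γ φ (c • v) = c * dplus Γ φ v := by
  have hslope : ∀ δ : ℝ, 0 < δ → slope Γ φ (c • v) δ = c * slope Γ φ v (c * δ) := by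
    intro δ hδ
    have harg : φ + δ • (c • v) = φ + (c * δ) • v := by rw [smul_smul, mul_comm]
    rw [slope, slope, harg]
    field_simp
  apply le_antisymm
  · have key : ∀ ε : ℝ, 0 < ε → dplus Γ φ (c • v) ≤ c * dplus Γ φ v + ε := by
      intro ε hε
      obtain ⟨r, ⟨δ, hδ, rfl⟩, hr⟩ := exists_lt_of_csInf_lt (slope_nonempty φ v)
        (lt_add_of_pos_right (dplus Γ φ v) (div_pos hε hcpos))
      have h1 := dplus_le_slope hm ht φ (c • v) (δ := δ / c) (div_pos hδ hcpos)
      rw [hslope _ (div_pos hδ hcpos), mul_div_cancel₀ _ hcpos.ne'] at h1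
      have : c * slope Γ φ v δ ≤ c * (dplus Γ φ v + ε / c) :=
        mul_le_mul_of_nonneg_left hr.le hcpos.le
      rw [mul_add, mul_div_cancel₀ _ hcpos.ne'] at this
      linarith
    by_contra hlt
    push_neg at hlt
    have := key ((dplus Γ φ (c • v) - c * dplus Γ φ v)/2) (by linarith)
    linarith
  · apply le_csInf (slope_nonempty φ (c • v))
    rintro r ⟨δ, hδ, rfl⟩
    rw [hslope _ hδ]
    exact mul_le_mul_of_nonneg_left (dplus_le_slope hm ht φ v (mul_pos hcpos hδ)) hcpos.le

include ht in
theorem dplus_const (φ : C(X, ℝ)) (c : ℝ) : dplus Γ φ (ContinuousMap.const X c) = c := by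
  have hs : ∀ δ : ℝ, 0 < δ → slope Γ φ (ContinuousMap.const X c) δ = c := by
    intro δ hδ
    have harg : φ + δ • (ContinuousMap.const X c) = φ + ContinuousMap.const X (δ * c) := by
      ext x; simp
    rw [slope, harg, ht, div_eq_iff hδ.ne']
    ring
  have himg : slope Γ φ (ContinuousMap.const X c) '' Set.Ioi 0 = {c} := by
    apply Set.eq_singleton_iff_unique_mem.2
    exact ⟨⟨1, by norm_num, hs 1 one_pos⟩, by rintro r ⟨δ, hδ, rfl⟩; exact hs δ hδ⟩
  rw [dplus, himg, csInf_singleton]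

include hm ht in
theorem dplus_nonneg (φ v : C(X, ℝ)) (hv : ∀ x, 0 ≤ v x) : 0 ≤ dplus Γ φ v := by
  apply le_csInf (slope_nonempty φ v)
  rintro r ⟨δ, hδ, rfl⟩
  have hδ' : (0:ℝ) < δ := hδ
  rw [slope]
  apply div_nonneg _ hδ'.le
  have : Γ φ ≤ Γ (φ + δ • v) := by
    apply hm
    intro x
    simp only [ContinuousMap.add_apply, ContinuousMap.smul_apply, smul_eq_mul]
    have := mul_nonneg hδ'.le (hv x)
    linarith
  linarith

include hm ht in
theorem dplus_le_sub (φ v : C(X, ℝ)) : dplus Γ φ v ≤ Γ (φ + v) - Γ φ := by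
  have := dplus_le_slope hm ht φ v one_pos
  rw [slope, one_smul, div_one] at this
  exact this

include hm ht in
theorem dplus_continuous (φ : C(X, ℝ)) : Continuous (dplus Γ φ) := by
  refine (LipschitzWith.of_dist_le_mul (K := 1) fun v w => ?_).continuous
  rw [Real.dist_eq, dist_eq_norm, NNReal.coe_one, one_mul, abs_le]
  constructor
  · have := dplus_lip hm ht φ w v
    rw [norm_sub_rev] at this
    linarith
  · have := dplus_lip hm ht φ v w
    linarith

include hm ht hc in
theorem dplus_symm_of_good (φ : C(X, ℝ)) (u : ℕ → C(X, ℝ)) (hu : DenseRange u)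
    (hall : ∀ n m : ℕ, φ ∈ good Γ (u n) (1 / (m + 1))) (v : C(X, ℝ)) :
    dplus Γ φ v + dplus Γ φ (-v) = 0 := by
  have hcont : Continuous fun w : C(X, ℝ) => dplus Γ φ w + dplus Γ φ (-w) :=
    (dplus_continuous hm ht φ).add ((dplus_continuous hm ht φ).comp continuous_neg)
  have hcl : IsClosed {w : C(X, ℝ) | dplus Γ φ w + dplus Γ φ (-w) ≤ 0} :=
    isClosed_le hcont continuous_const
  have hrange : ∀ n, dplus Γ φ (u n) + dplus Γ φ (-(u n)) ≤ 0 := by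
    intro n
    by_contra hpos
    push_neg at hpos
    obtain ⟨m, hmm⟩ := exists_nat_one_div_lt hpos
    obtain ⟨δ, hδ, hgood⟩ := hall n m
    have h1 := dplus_le_slope hm ht φ (u n) hδ
    have h2 := dplus_le_slope hm ht φ (-(u n)) hδ
    have harg : φ + δ • (-(u n)) = φ - δ • (u n) := by module
    have hsum : slope Γ φ (u n) δ + slope Γ φ (-(u n)) δ < 1 / (m + 1) := by
      rw [slope, slope, harg, ← add_div, div_lt_iff₀ hδ]
      have : (1:ℝ) / (m + 1) * δ = δ * (1 / (m+1)) := by ring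
      nlinarith [hgood]
    linarith
  have hsub : Set.range u ⊆ {w : C(X, ℝ) | dplus Γ φ w + dplus Γ φ (-w) ≤ 0} := by
    rintro _ ⟨n, rfl⟩; exact hrange n
  have hle : dplus Γ φ v + dplus Γ φ (-v) ≤ 0 :=
    hcl.closure_subset_iff.2 hsub (hu v)
  have := dplus_pair_nonneg hm ht hc φ v
  linarith

include hm ht hc in
theorem dplus_neg (φ v : C(X, ℝ)) (u : ℕ → C(X, ℝ)) (hu : DenseRange u)
    (hall : ∀ n m : ℕ, φ ∈ good Γ (u n) (1 / (m + 1))) :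
    dplus Γ φ (-v) = -dplus Γ φ v := by
  have := dplus_symm_of_good hm ht hc φ u hu hall v
  linarith

include hm ht hc in
theorem dplus_add (φ v w : C(X, ℝ)) (u : ℕ → C(X, ℝ)) (hu : DenseRange u)
    (hall : ∀ n m : ℕ, φ ∈ good Γ (u n) (1 / (m + 1))) :
    dplus Γ φ (v + w) = dplus Γ φ v + dplus Γ φ w := by
  apply le_antisymm (dplus_subadd hm ht hc φ v w)
  have h1 := dplus_subadd hm ht hc φ (-v) (-w)
  have h2 := dplus_neg hm ht hc φ v u hu hall
  have h3 := dplus_neg hm ht hc φ w u hu hall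
  have h4 := dplus_neg hm ht hc φ (v + w) u hu hall
  have h5 : -v + -w = -(v + w) := by module
  rw [h5, h4, h2, h3] at h1
  linarith

include hm ht hc in
theorem dplus_smul (φ v : C(X, ℝ)) (c : ℝ) (u : ℕ → C(X, ℝ)) (hu : DenseRange u)
    (hall : ∀ n m : ℕ, φ ∈ good Γ (u n) (1 / (m + 1))) :
    dplus Γ φ (c • v) = c * dplus Γ φ v := by
  rcases lt_trichotomy c 0 with hneg | rfl | hpos
  · have h1 : c • v = -((-c) • v) := by module
    rw [h1, dplus_neg hm ht hc φ _ u hu hall, dplus_smul_pos hm ht hc φ v (by linarith : 0 < -c)]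
    ring
  · have h0 : (0:ℝ) • v = ContinuousMap.const X 0 := by ext x; simp
    rw [h0, dplus_const ht φ 0]
    ring
  · exact dplus_smul_pos hm ht hc φ v hpos


variable [MeasurableSpace X] [BorelSpace X]
variable {L : C(X, ℝ) → ℝ}
variable (hadd : ∀ v w, L (v + w) = L v + L w)
  (hsmul : ∀ (c : ℝ) v, L (c • v) = c * L v)
  (hpos : ∀ v : C(X, ℝ), (∀ x, 0 ≤ v x) → 0 ≤ L v)
  (hconst : ∀ c : ℝ, L (ContinuousMap.const X c) = c)

include hadd hpos in
theorem L_mono {v w : C(X, ℝ)} (h : ∀ x, v x ≤ w x) : L v ≤ L w := by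
  have h1 : L w = L v + L (w - v) := by rw [← hadd]; congr 1; module
  have h2 : 0 ≤ L (w - v) := hpos _ fun x => by
    simp only [ContinuousMap.sub_apply]; linarith [h x]
  linarith

include hadd hsmul in
theorem L_zero : L 0 = 0 := by
  have := hsmul 0 0; simpa using this

include hadd hsmul in
theorem L_sum {ι : Type*} (s : Finset ι) (g : ι → C(X, ℝ)) :
    L (∑ i ∈ s, g i) = ∑ i ∈ s, L (g i) := by
  classical
  induction s using Finset.induction with
  | empty => simpa using L_zero hadd hsmul
  | insert _ _ hnot ih =>
    rw [Finset.sum_insert hnot, Finset.sum_insert hnot, hadd, ih]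

/-- The set of values of `L` on test functions dominating the indicator of `K`. -/
def lamSet (L : C(X, ℝ) → ℝ) (K : Set X) : Set ℝ :=
  {r : ℝ | ∃ f : C(X, ℝ), (∀ x, 0 ≤ f x) ∧ (∀ x ∈ K, 1 ≤ f x) ∧ r = L f}

noncomputable def lamR (L : C(X, ℝ) → ℝ) (K : Set X) : ℝ := sInf (lamSet L K)

include hconst in
theorem lamSet_nonempty (K : Set X) : (lamSet L K).Nonempty :=
  ⟨1, ContinuousMap.const X 1, fun x => by norm_num, fun x _ => by norm_num, (hconst 1).symm⟩

include hpos in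
theorem lamSet_nonneg (K : Set X) : ∀ r ∈ lamSet L K, 0 ≤ r := by
  rintro r ⟨f, hf0, _, rfl⟩; exact hpos f hf0

include hpos in
theorem lamSet_bddBelow (K : Set X) : BddBelow (lamSet L K) :=
  ⟨0, lamSet_nonneg hpos K⟩

include hpos in
theorem lamR_nonneg (K : Set X) : 0 ≤ lamR L K := by
  rcases Set.eq_empty_or_nonempty (lamSet L K) with h | h
  · rw [lamR, h, Real.sInf_empty]
  · exact le_csInf h (lamSet_nonneg hpos K)

include hpos in
theorem lamR_le (K : Set X) {f : C(X, ℝ)} (hf0 : ∀ x, 0 ≤ f x) (hf1 : ∀ x ∈ K, 1 ≤ f x) :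
    lamR L K ≤ L f :=
  csInf_le (lamSet_bddBelow hpos K) ⟨f, hf0, hf1, rfl⟩

include hpos hconst in
theorem lamR_exists (K : Set X) {ε : ℝ} (hε : 0 < ε) :
    ∃ f : C(X, ℝ), (∀ x, 0 ≤ f x) ∧ (∀ x ∈ K, 1 ≤ f x) ∧ L f < lamR L K + ε := by
  obtain ⟨r, ⟨f, hf0, hf1, rfl⟩, hr⟩ := exists_lt_of_csInf_lt (lamSet_nonempty hconst K)
    (lt_add_of_pos_right (lamR L K) hε)
  exact ⟨f, hf0, hf1, hr⟩

include hpos hconst in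
theorem lamR_mono {K₁ K₂ : Set X} (h : K₁ ⊆ K₂) : lamR L K₁ ≤ lamR L K₂ := by
  apply le_csInf (lamSet_nonempty hconst K₂)
  rintro r ⟨f, hf0, hf1, rfl⟩
  exact lamR_le hpos K₁ hf0 (fun x hx => hf1 x (h hx))

include hadd hsmul hpos hconst in
theorem lamR_univ : lamR L Set.univ = 1 := by
  apply le_antisymm
  · exact (lamR_le hpos _ (fun x => by norm_num) (fun x _ => by norm_num)).trans_eq (hconst 1)
  · apply le_csInf (lamSet_nonempty hconst _)
    rintro r ⟨f, hf0, hf1, rfl⟩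
    have : L (ContinuousMap.const X 1) ≤ L f := L_mono hadd hpos fun x => by
      simpa using hf1 x (Set.mem_univ x)
    rw [hconst 1] at this; exact this

include hadd hsmul hpos hconst in
theorem lamR_le_one (K : Set X) : lamR L K ≤ 1 := by
  rw [← lamR_univ hadd hsmul hpos hconst]
  exact lamR_mono hpos hconst (Set.subset_univ K)

include hadd hpos hconst in
theorem lamR_union (K₁ K₂ : Set X) : lamR L (K₁ ∪ K₂) ≤ lamR L K₁ + lamR L K₂ := by
  have key : ∀ ε : ℝ, 0 < ε → lamR L (K₁ ∪ K₂) ≤ lamR L K₁ + lamR L K₂ + ε := by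
    intro ε hε
    obtain ⟨f₁, h10, h11, h1v⟩ := lamR_exists hpos hconst K₁ (half_pos hε)
    obtain ⟨f₂, h20, h21, h2v⟩ := lamR_exists hpos hconst K₂ (half_pos hε)
    have hadm : lamR L (K₁ ∪ K₂) ≤ L (f₁ + f₂) := by
      apply lamR_le hpos
      · intro x; simp only [ContinuousMap.add_apply]; linarith [h10 x, h20 x]
      · rintro x (hx | hx) <;> simp only [ContinuousMap.add_apply]
        · linarith [h11 x hx, h20 x]
        · linarith [h21 x hx, h10 x]
    rw [hadd] at hadm
    linarith
  by_contra hlt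
  push_neg at hlt
  have := key ((lamR L (K₁ ∪ K₂) - (lamR L K₁ + lamR L K₂))/2) (by linarith)
  linarith

include hadd hpos hconst in
theorem lamR_disjoint {K₁ K₂ : Set X} (hd : Disjoint K₁ K₂) (h₁ : IsClosed K₁)
    (h₂ : IsClosed K₂) : lamR L K₁ + lamR L K₂ ≤ lamR L (K₁ ∪ K₂) := by
  obtain ⟨g, hg1, hg2, hg01⟩ := exists_continuous_zero_one_of_isClosed h₁ h₂ hd
  have key : ∀ ε : ℝ, 0 < ε → lamR L K₁ + lamR L K₂ ≤ lamR L (K₁ ∪ K₂) + ε := by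
    intro ε hε
    obtain ⟨f, hf0, hf1, hfv⟩ := lamR_exists hpos hconst (K₁ ∪ K₂) hε
    have hA : lamR L K₁ ≤ L (f * (1 - g)) := by
      apply lamR_le hpos
      · intro x
        simp only [ContinuousMap.mul_apply, ContinuousMap.sub_apply, ContinuousMap.one_apply]
        have := (hg01 x).2
        have := hf0 x
        nlinarith
      · intro x hx
        have hgx : g x = 0 := hg1 hx
        simp only [ContinuousMap.mul_apply, ContinuousMap.sub_apply, ContinuousMap.one_apply, hgx]
        have := hf1 x (Or.inl hx)
        linarith
    have hB : lamR L K₂ ≤ L (f * g) := by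
      apply lamR_le hpos
      · intro x
        simp only [ContinuousMap.mul_apply]
        exact mul_nonneg (hf0 x) (hg01 x).1
      · intro x hx
        have hgx : g x = 1 := hg2 hx
        simp only [ContinuousMap.mul_apply, hgx, mul_one]
        exact hf1 x (Or.inr hx)
    have hsum : L (f * (1 - g)) + L (f * g) = L f := by
      rw [← hadd]; congr 1; ring
    linarith
  by_contra hlt
  push_neg at hlt
  have := key ((lamR L K₁ + lamR L K₂ - lamR L (K₁ ∪ K₂))/2) (by linarith)
  linarith

open TopologicalSpace in
noncomputable def rieszContent (L : C(X, ℝ) → ℝ)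
    (hadd : ∀ v w, L (v + w) = L v + L w)
    (hsmul : ∀ (c : ℝ) v, L (c • v) = c * L v)
    (hpos : ∀ v : C(X, ℝ), (∀ x, 0 ≤ v x) → 0 ≤ L v)
    (hconst : ∀ c : ℝ, L (ContinuousMap.const X c) = c) : Content X where
  toFun K := Real.toNNReal (lamR L (K : Set X))
  mono' K₁ K₂ h := Real.toNNReal_mono (lamR_mono hpos hconst h)
  sup_disjoint' K₁ K₂ hd h₁ h₂ := by
    have heq : lamR L ((K₁ ⊔ K₂ : Compacts X) : Set X) = lamR L K₁ + lamR L K₂ := by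
      rw [Compacts.coe_sup]
      exact le_antisymm (lamR_union hadd hpos hconst _ _) (lamR_disjoint hadd hpos hconst hd h₁ h₂)
    show (lamR L ((K₁ ⊔ K₂ : Compacts X) : Set X)).toNNReal = _
    rw [heq, Real.toNNReal_add (lamR_nonneg hpos _) (lamR_nonneg hpos _)]
  sup_le' K₁ K₂ := by
    have h1 : lamR L ((K₁ ⊔ K₂ : Compacts X) : Set X) ≤ lamR L K₁ + lamR L K₂ := by
      rw [Compacts.coe_sup]; exact lamR_union hadd hpos hconst _ _
    calc Real.toNNReal (lamR L ((K₁ ⊔ K₂ : Compacts X) : Set X))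
        ≤ Real.toNNReal (lamR L K₁ + lamR L K₂) := Real.toNNReal_mono h1
      _ = _ := Real.toNNReal_add (lamR_nonneg hpos _) (lamR_nonneg hpos _)

include hadd hsmul hpos hconst in
theorem rieszContent_regular :
    MeasureTheory.Content.ContentRegular (rieszContent L hadd hsmul hpos hconst) := by
  intro K
  apply le_antisymm
  · apply le_iInf₂
    intro K' hK'
    exact ENNReal.coe_le_coe.2 (Real.toNNReal_mono
      (lamR_mono hpos hconst (hK'.trans interior_subset)))
  · apply ENNReal.le_of_forall_pos_le_add
    intro ε hε _
    set εr : ℝ := (ε : ℝ) with hεr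
    have hεrpos : 0 < εr := hε
    -- choose θ and ε'
    set θ : ℝ := (1 + εr/2)⁻¹ with hθ
    have hθpos : 0 < θ := by rw [hθ]; positivity
    have hθlt : θ < 1 := by
      rw [hθ, inv_lt_one₀ (by positivity)]; linarith
    set ε' : ℝ := εr * θ / 2 with hε'
    have hε'pos : 0 < ε' := by positivity
    obtain ⟨f, hf0, hf1, hfv⟩ := lamR_exists hpos hconst (K : Set X) hε'pos
    set K' : TopologicalSpace.Compacts X :=
      ⟨{x | θ ≤ f x}, (isClosed_le continuous_const f.continuous).isCompact⟩ with hK'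
    have hsub : (K : Set X) ⊆ interior (K' : Set X) := by
      have hopen : IsOpen {x : X | θ < f x} := isOpen_lt continuous_const f.continuous
      have h1 : (K : Set X) ⊆ {x | θ < f x} := fun x hx => lt_of_lt_of_le hθlt (hf1 x hx)
      have h2 : {x : X | θ < f x} ⊆ (K' : Set X) := fun x hx => (le_of_lt hx : θ ≤ f x)
      exact h1.trans (interior_maximal h2 hopen)
    have hadm : lamR L (K' : Set X) ≤ L (θ⁻¹ • f) := by
      apply lamR_le hpos
      · intro x
        simp only [ContinuousMap.smul_apply, smul_eq_mul]
        exact mul_nonneg (inv_nonneg.2 hθpos.le) (hf0 x)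
      · intro x hx
        simp only [ContinuousMap.smul_apply, smul_eq_mul]
        have hx' : θ ≤ f x := hx
        calc (1:ℝ) = θ⁻¹ * θ := (inv_mul_cancel₀ hθpos.ne').symm
          _ ≤ θ⁻¹ * f x := mul_le_mul_of_nonneg_left hx' (by positivity)
    rw [hsmul] at hadm
    have hθinv : θ⁻¹ = 1 + εr/2 := by rw [hθ, inv_inv]
    have hbound : θ⁻¹ * L f ≤ lamR L (K : Set X) + εr := by
      have h1 : θ⁻¹ * L f ≤ θ⁻¹ * (lamR L (K : Set X) + ε') :=
        mul_le_mul_of_nonneg_left hfv.le (by positivity)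
      have hKle1 : lamR L (K : Set X) ≤ 1 := lamR_le_one hadd hsmul hpos hconst _
      have hεθ : θ⁻¹ * ε' = εr/2 := by
        rw [hθinv, hε', hθ]
        field_simp
      have hK0 : 0 ≤ lamR L (K : Set X) := lamR_nonneg hpos _
      nlinarith
    have hfinal : lamR L (K' : Set X) ≤ lamR L (K : Set X) + εr :=
      hadm.trans hbound
    refine le_trans (iInf₂_le K' hsub) ?_
    show ((lamR L (K' : Set X)).toNNReal : ℝ≥0∞) ≤ ((lamR L (K : Set X)).toNNReal : ℝ≥0∞) + (ε : ℝ≥0∞)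
    rw [← ENNReal.coe_add, ENNReal.coe_le_coe]
    calc (lamR L (K' : Set X)).toNNReal ≤ (lamR L (K : Set X) + εr).toNNReal :=
          Real.toNNReal_mono hfinal
      _ = (lamR L (K : Set X)).toNNReal + εr.toNNReal :=
          Real.toNNReal_add (lamR_nonneg hpos _) hεrpos.le
      _ = (lamR L (K : Set X)).toNNReal + ε := by rw [hεr, Real.toNNReal_coe]

theorem count_lemma {N : ℕ} (hN : 0 < N) {t : ℝ} (h0 : 0 ≤ t) (h1 : t ≤ 1) :
    ((∑ k ∈ Finset.range N, if ((k:ℝ)+1)/N ≤ t then (1:ℝ) else 0) ≤ N * t) ∧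
    (N * t ≤ ∑ k ∈ Finset.range N, if (k:ℝ)/N ≤ t then (1:ℝ) else 0) ∧
    ((∑ k ∈ Finset.range N, if (k:ℝ)/N ≤ t then (1:ℝ) else 0) ≤
      (∑ k ∈ Finset.range N, if ((k:ℝ)+1)/N ≤ t then (1:ℝ) else 0) + 1) := by
  classical
  have hNR : (0:ℝ) < N := Nat.cast_pos.2 hN
  set m : ℕ := Nat.floor ((N:ℝ) * t) with hm
  have hmt : (m:ℝ) ≤ N * t := Nat.floor_le (by positivity)
  have hmt' : (N:ℝ) * t < m + 1 := Nat.lt_floor_add_one _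
  have c1 : ∀ k : ℕ, (((k:ℝ)+1)/N ≤ t) = (k < m) := by
    intro k
    apply propext
    rw [div_le_iff₀ hNR, mul_comm]
    constructor
    · intro h
      have : (k+1 : ℕ) ≤ m := Nat.le_floor (by push_cast; linarith)
      omega
    · intro h
      have : (k+1 : ℕ) ≤ m := h
      have := (Nat.le_floor_iff (by positivity : (0:ℝ) ≤ (N:ℝ)*t)).1 this
      push_cast at this
      linarith
  have c0 : ∀ k : ℕ, ((k:ℝ)/N ≤ t) = (k < m + 1) := by
    intro k
    apply propext
    rw [div_le_iff₀ hNR, mul_comm]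
    constructor
    · intro h
      have : k ≤ m := Nat.le_floor h
      omega
    · intro h
      have hk : k ≤ m := by omega
      have := (Nat.le_floor_iff (by positivity : (0:ℝ) ≤ (N:ℝ)*t)).1 hk
      linarith
  have s1 : (∑ k ∈ Finset.range N, if ((k:ℝ)+1)/N ≤ t then (1:ℝ) else 0)
      = ((min N m : ℕ) : ℝ) := by
    simp only [c1]
    rw [Finset.sum_boole]
    congr 1
    have : (Finset.range N).filter (fun k => k < m) = Finset.range (min N m) := by
      ext k; simp [Finset.mem_range]
    rw [this, Finset.card_range]
  have s0 : (∑ k ∈ Finset.range N, if (k:ℝ)/N ≤ t then (1:ℝ) else 0)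
      = ((min N (m+1) : ℕ) : ℝ) := by
    simp only [c0]
    rw [Finset.sum_boole]
    congr 1
    have : (Finset.range N).filter (fun k => k < m + 1) = Finset.range (min N (m+1)) := by
      ext k; simp [Finset.mem_range]
    rw [this, Finset.card_range]
  refine ⟨?_, ?_, ?_⟩
  · rw [s1]
    have : ((min N m : ℕ) : ℝ) ≤ (m : ℝ) := by
      have : min N m ≤ m := min_le_right _ _
      exact_mod_cast this
    linarith
  · rw [s0]
    rw [Nat.cast_min]
    apply le_min
    · calc (N:ℝ) * t ≤ N * 1 := by nlinarith
        _ = N := mul_one _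
    · push_cast; linarith
  · rw [s0, s1]
    have : (min N (m+1) : ℕ) ≤ min N m + 1 := by omega
    have := (Nat.cast_le (α := ℝ)).2 this
    push_cast at this ⊢
    linarith

theorem cm_integrable (μ : Measure X) [IsFiniteMeasure μ] (f : C(X, ℝ)) :
    Integrable (fun x => f x) μ :=
  (BoundedContinuousFunction.mkOfCompact f).integrable μ

variable (L) in
noncomputable def rieszMeasure
    (hadd : ∀ v w, L (v + w) = L v + L w)
    (hsmul : ∀ (c : ℝ) v, L (c • v) = c * L v)
    (hpos : ∀ v : C(X, ℝ), (∀ x, 0 ≤ v x) → 0 ≤ L v)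
    (hconst : ∀ c : ℝ, L (ContinuousMap.const X c) = c) : Measure X :=
  (rieszContent L hadd hsmul hpos hconst).measure

include hadd hsmul hpos hconst in
theorem rieszMeasure_compact {K : Set X} (hK : IsCompact K) :
    (rieszMeasure L hadd hsmul hpos hconst) K = ((lamR L K).toNNReal : ℝ≥0∞) := by
  have := (rieszContent L hadd hsmul hpos hconst).measure_eq_content_of_regular
    (rieszContent_regular hadd hsmul hpos hconst) ⟨K, hK⟩
  exact this

include hadd hsmul hpos hconst in
theorem rieszMeasure_compact_toReal {K : Set X} (hK : IsCompact K) :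
    ((rieszMeasure L hadd hsmul hpos hconst) K).toReal = lamR L K := by
  rw [rieszMeasure_compact hadd hsmul hpos hconst hK, ENNReal.coe_toReal,
    Real.coe_toNNReal _ (lamR_nonneg hpos K)]

include hadd hsmul hpos hconst in
theorem rieszMeasure_prob : IsProbabilityMeasure (rieszMeasure L hadd hsmul hpos hconst) := by
  constructor
  rw [rieszMeasure_compact hadd hsmul hpos hconst isCompact_univ,
    lamR_univ hadd hsmul hpos hconst]
  norm_num

include hadd hsmul hpos hconst in
theorem riesz_integral_of_Icc (f : C(X, ℝ)) (hf : ∀ x, f x ∈ Set.Icc (0:ℝ) 1) :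
    ∫ x, f x ∂(rieszMeasure L hadd hsmul hpos hconst) = L f := by
  set μ := rieszMeasure L hadd hsmul hpos hconst with hμ
  haveI : IsProbabilityMeasure μ := rieszMeasure_prob hadd hsmul hpos hconst
  set F : ℝ → Set X := fun c => {x | c ≤ f x} with hF
  have hFclosed : ∀ c, IsClosed (F c) := fun c => isClosed_le continuous_const f.continuous
  have hFmeas : ∀ c, MeasurableSet (F c) := fun c => (hFclosed c).measurableSet
  have hμF : ∀ c, (μ (F c)).toReal = lamR L (F c) := fun c =>
    rieszMeasure_compact_toReal hadd hsmul hpos hconst (hFclosed c).isCompact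
  set I : ℝ := ∫ x, f x ∂μ with hI
  have key : ∀ N : ℕ, 0 < N → ∀ ε : ℝ, 0 < ε → |I - L f| ≤ 2/N + ε := by
    intro N hN ε hε
    have hNR : (0:ℝ) < N := Nat.cast_pos.2 hN
    have hN1 : (1:ℝ) ≤ N := by exact_mod_cast hN
    set a : ℕ → ℝ := fun k => lamR L (F ((k:ℝ)/N)) with ha
    have hind : ∀ c : ℝ, ∫ x, (F c).indicator (1 : X → ℝ) x ∂μ = (μ (F c)).toReal :=
      fun c => integral_indicator_one (hFmeas c)
    have hint_f : Integrable (fun x => f x) μ := cm_integrable μ f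
    have hindint : ∀ c : ℝ, Integrable ((F c).indicator (1 : X → ℝ)) μ :=
      fun c => (integrable_const 1).indicator (hFmeas c)
    have hindeq : ∀ (x : X) (c : ℝ), (F c).indicator (1 : X → ℝ) x
        = if c ≤ f x then (1:ℝ) else 0 := by
      intro x c
      rw [Set.indicator_apply]
      rfl
    -- integral bounds
    have hS1 : (∑ k ∈ Finset.range N, a (k+1)) ≤ N * I := by
      have hptw : ∀ x, (∑ k ∈ Finset.range N, (F (((k:ℝ)+1)/N)).indicator (1 : X → ℝ) x)
          ≤ (N:ℝ) * f x := by
        intro x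
        have hcount := (count_lemma hN (hf x).1 (hf x).2).1
        refine le_trans (le_of_eq ?_) hcount
        exact Finset.sum_congr rfl fun k _ => hindeq x _
      calc ∑ k ∈ Finset.range N, a (k+1)
          = ∑ k ∈ Finset.range N, (μ (F (((k:ℝ)+1)/N))).toReal := by
            refine Finset.sum_congr rfl fun k _ => ?_
            rw [ha]; push_cast; rw [hμF]
        _ = ∫ x, (∑ k ∈ Finset.range N, (F (((k:ℝ)+1)/N)).indicator (1 : X → ℝ) x) ∂μ := by
            rw [integral_finset_sum _ (fun k _ => hindint _)]
            exact (Finset.sum_congr rfl fun k _ => (hind _).symm)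
        _ ≤ ∫ x, (N:ℝ) * f x ∂μ := by
            exact integral_mono (integrable_finset_sum _ fun k _ => hindint _)
              (hint_f.const_mul _) hptw
        _ = N * I := by rw [hI, integral_const_mul]
    have hS0 : N * I ≤ ∑ k ∈ Finset.range N, a k := by
      have hptw : ∀ x, (N:ℝ) * f x
          ≤ (∑ k ∈ Finset.range N, (F ((k:ℝ)/N)).indicator (1 : X → ℝ) x) := by
        intro x
        have hcount := (count_lemma hN (hf x).1 (hf x).2).2.1
        refine hcount.trans (le_of_eq ?_)
        exact (Finset.sum_congr rfl fun k _ => (hindeq x _).symm)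
      calc (N:ℝ) * I = ∫ x, (N:ℝ) * f x ∂μ := by rw [hI, integral_const_mul]
        _ ≤ ∫ x, (∑ k ∈ Finset.range N, (F ((k:ℝ)/N)).indicator (1 : X → ℝ) x) ∂μ := by
            exact integral_mono (hint_f.const_mul _)
              (integrable_finset_sum _ fun k _ => hindint _) hptw
        _ = ∑ k ∈ Finset.range N, (μ (F ((k:ℝ)/N))).toReal := by
            rw [integral_finset_sum _ (fun k _ => hindint _)]
            exact (Finset.sum_congr rfl fun k _ => hind _)
        _ = ∑ k ∈ Finset.range N, a k := by
            refine Finset.sum_congr rfl fun k _ => ?_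
            rw [ha, hμF]
    -- lower bound for L f
    have hc1 : (∑ k ∈ Finset.range N, a (k+1)) ≤ N * L f + 1 := by
      set h : ℕ → C(X, ℝ) := fun k =>
        ⟨fun x => min 1 (max 0 ((N:ℝ) * f x - k)), by fun_prop⟩ with hh
      have hadm : ∀ k, a (k+1) ≤ L (h k) := by
        intro k
        rw [ha]
        push_cast
        apply lamR_le hpos
        · intro x
          simp only [hh, ContinuousMap.coe_mk]
          exact le_min zero_le_one (le_max_left 0 _)
        · intro x hx
          have hx' : ((k:ℝ)+1)/N ≤ f x := hx
          rw [div_le_iff₀ hNR] at hx'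
          have h1 : (1:ℝ) ≤ (N:ℝ) * f x - k := by nlinarith
          simp only [hh, ContinuousMap.coe_mk]
          exact le_min le_rfl (le_trans h1 (le_max_right 0 _))
      have hptw : ∀ x, (∑ k ∈ Finset.range N, h k x) ≤ (N:ℝ) * f x + 1 := by
        intro x
        have hcount1 := (count_lemma hN (hf x).1 (hf x).2).1
        have hcount3 := (count_lemma hN (hf x).1 (hf x).2).2.2
        have hterm : ∀ k ∈ Finset.range N, h k x ≤ (if (k:ℝ)/N ≤ f x then (1:ℝ) else 0) := by
          intro k _
          by_cases hcase : (k:ℝ)/N ≤ f x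
          · simp only [hcase, if_true, hh, ContinuousMap.coe_mk]
            exact min_le_left _ _
          · simp only [hcase, if_false, hh, ContinuousMap.coe_mk]
            push_neg at hcase
            have h2 : (N:ℝ) * f x - k < 0 := by
              rw [lt_div_iff₀ hNR] at hcase
              linarith
            have hmax : max 0 ((N:ℝ) * f x - k) = 0 := max_eq_left h2.le
            rw [hmax, min_eq_right zero_le_one]
        have := Finset.sum_le_sum hterm
        linarith
      have hsum1 : (∑ k ∈ Finset.range N, a (k+1)) ≤ ∑ k ∈ Finset.range N, L (h k) :=
        Finset.sum_le_sum fun k _ => hadm k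
      have hmono : L (∑ k ∈ Finset.range N, h k) ≤ L ((N:ℝ) • f + ContinuousMap.const X 1) := by
        apply L_mono hadd hpos
        intro x
        have := hptw x
        simpa [ContinuousMap.sum_apply] using this
      rw [← L_sum hadd hsmul] at hsum1
      have hR : L ((N:ℝ) • f + ContinuousMap.const X 1) = N * L f + 1 := by
        rw [hadd, hsmul, hconst]
      linarith [hsum1.trans (hmono.trans_eq hR)]
    -- upper bound for L f
    have hc0 : N * L f ≤ (∑ k ∈ Finset.range N, a k) + ε := by
      have hex : ∀ k : ℕ, ∃ g : C(X, ℝ), (∀ x, 0 ≤ g x) ∧ (∀ x ∈ F ((k:ℝ)/N), 1 ≤ g x) ∧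
          L g < a k + ε/N := fun k => lamR_exists hpos hconst _ (by positivity)
      choose g hg0 hg1 hgv using hex
      have hptw : ∀ x, (N:ℝ) * f x ≤ (∑ k ∈ Finset.range N, g k x) := by
        intro x
        have hcount := (count_lemma hN (hf x).1 (hf x).2).2.1
        refine hcount.trans (Finset.sum_le_sum ?_)
        intro k _
        by_cases hcase : (k:ℝ)/N ≤ f x
        · simp only [hcase, if_true]
          exact hg1 k x hcase
        · simp only [hcase, if_false]
          exact hg0 k x
      have hmono : L ((N:ℝ) • f) ≤ L (∑ k ∈ Finset.range N, g k) := by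
        apply L_mono hadd hpos
        intro x
        have := hptw x
        simpa [ContinuousMap.sum_apply] using this
      rw [hsmul, L_sum hadd hsmul] at hmono
      have hsum : (∑ k ∈ Finset.range N, L (g k)) ≤ (∑ k ∈ Finset.range N, a k) + ε := by
        have h1 : (∑ k ∈ Finset.range N, L (g k)) ≤ ∑ k ∈ Finset.range N, (a k + ε/N) :=
          Finset.sum_le_sum fun k _ => (hgv k).le
        rw [Finset.sum_add_distrib, Finset.sum_const, Finset.card_range, nsmul_eq_mul,
          mul_div_cancel₀ _ hNR.ne'] at h1
        exact h1
      linarith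
    -- telescoping
    have htel : (∑ k ∈ Finset.range N, a k) ≤ (∑ k ∈ Finset.range N, a (k+1)) + 1 := by
      have h := Finset.sum_range_sub' a N
      have hdiff : (∑ k ∈ Finset.range N, a k) - (∑ k ∈ Finset.range N, a (k+1))
          = a 0 - a N := by
        rw [← Finset.sum_sub_distrib]
        exact h
      have h2 : a 0 ≤ 1 := lamR_le_one hadd hsmul hpos hconst _
      have h3 : 0 ≤ a N := lamR_nonneg hpos _
      linarith
    -- combine
    have e1 : I - L f ≤ 2/N := by
      rw [le_div_iff₀ hNR]
      nlinarith
    have e2 : L f - I - ε ≤ 1/N := by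
      rw [le_div_iff₀ hNR]
      nlinarith
    have h12 : (1:ℝ)/N ≤ 2/N := by gcongr <;> norm_num
    rw [abs_le]
    constructor
    · linarith
    · linarith [hε.le]
  by_contra hne
  have hd : 0 < |I - L f| := abs_pos.2 (sub_ne_zero.2 hne)
  obtain ⟨N, hNgt⟩ := exists_nat_gt (4 / |I - L f|)
  have hNRpos : (0:ℝ) < N := lt_trans (by positivity) hNgt
  have hN : 0 < N := by exact_mod_cast hNRpos
  have hkey := key N hN (|I - L f|/4) (by positivity)
  have h2N : 2/(N:ℝ) < |I - L f|/2 := by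
    rw [div_lt_div_iff₀ hNRpos (by norm_num : (0:ℝ) < 2)]
    rw [div_lt_iff₀ hd] at hNgt
    nlinarith
  linarith

include hadd hsmul hpos hconst in
theorem riesz_integral (f : C(X, ℝ)) :
    ∫ x, f x ∂(rieszMeasure L hadd hsmul hpos hconst) = L f := by
  set μ := rieszMeasure L hadd hsmul hpos hconst with hμ
  haveI : IsProbabilityMeasure μ := rieszMeasure_prob hadd hsmul hpos hconst
  set c : ℝ := ‖f‖ with hcdef
  have hc0 : 0 ≤ c := norm_nonneg f
  have hcne : (2*c+1) ≠ 0 := by positivity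
  set g : C(X, ℝ) := (2*c+1)⁻¹ • (f + ContinuousMap.const X c) with hg
  have hb : ∀ x, |f x| ≤ c := by
    intro x
    have := f.norm_coe_le_norm x
    rwa [Real.norm_eq_abs] at this
  have hgapp : ∀ x, g x = (2*c+1)⁻¹ * (f x + c) := by
    intro x; simp [hg]; ring
  have hgIcc : ∀ x, g x ∈ Set.Icc (0:ℝ) 1 := by
    intro x
    have h1 := (abs_le.mp (hb x)).1
    have h2 := (abs_le.mp (hb x)).2
    rw [hgapp x]
    constructor
    · apply mul_nonneg (by positivity); linarith
    · rw [inv_mul_le_iff₀ (by positivity)]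
      linarith
  have hfg : ∀ x, f x = (2*c+1) * g x - c := by
    intro x
    rw [hgapp x]
    field_simp
    ring
  have hLf : L f = (2*c+1) * L g - c := by
    have h1 : f = (2*c+1) • g - ContinuousMap.const X c := by
      ext x
      simp only [ContinuousMap.sub_apply, ContinuousMap.smul_apply, smul_eq_mul,
        ContinuousMap.const_apply]
      exact hfg x
    have h2 : L ((2*c+1) • g) = L f + L (ContinuousMap.const X c) := by
      rw [← hadd]
      congr 1
      rw [h1]
      module
    rw [hsmul, hconst] at h2
    linarith
  have hInt : ∫ x, f x ∂μ = (2*c+1) * (∫ x, g x ∂μ) - c := by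
    have hgint : Integrable (fun x => g x) μ := cm_integrable μ g
    calc ∫ x, f x ∂μ = ∫ x, ((2*c+1) * g x - c) ∂μ := by
          exact integral_congr_ae (Filter.Eventually.of_forall hfg)
      _ = (∫ x, (2*c+1) * g x ∂μ) - ∫ _, c ∂μ := by
          exact integral_sub (hgint.const_mul _) (integrable_const c)
      _ = (2*c+1) * (∫ x, g x ∂μ) - c := by
          rw [integral_const_mul, integral_const, probReal_univ, one_smul]
  rw [hInt, riesz_integral_of_Icc hadd hsmul hpos hconst g hgIcc, hLf]


theorem prob_ext {X : Type*} [MetricSpace X] [CompactSpace X] [Nonempty X]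
    [MeasurableSpace X] [BorelSpace X] (μ ν : ProbabilityMeasure X)
    (h : ∀ f : C(X, ℝ), ∫ x, f x ∂(μ : Measure X) = ∫ x, f x ∂(ν : Measure X)) : μ = ν := by
  apply MeasureTheory.ProbabilityMeasure.toMeasure_injective
  apply ext_of_forall_lintegral_eq_of_IsFiniteMeasure
  intro f
  have hfin1 := BoundedContinuousFunction.lintegral_lt_top_of_nnreal (μ : Measure X) f
  have hfin2 := BoundedContinuousFunction.lintegral_lt_top_of_nnreal (ν : Measure X) f
  have h1 := BoundedContinuousFunction.toReal_lintegral_coe_eq_integral f (μ : Measure X)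
  have h2 := BoundedContinuousFunction.toReal_lintegral_coe_eq_integral f (ν : Measure X)
  set g : C(X, ℝ) := ⟨fun x => (f x : ℝ), NNReal.continuous_coe.comp f.continuous⟩ with hg
  have hgf := h g
  apply (ENNReal.toReal_eq_toReal_iff' hfin1.ne hfin2.ne).1
  rw [h1, h2]
  exact hgf

theorem ereal_cancel {E : EReal} {b c : ℝ} (h : E + (b : EReal) = (c : EReal)) :
    E = ((c - b : ℝ) : EReal) := by
  induction E using EReal.rec with
  | bot => simp at h
  | coe x =>
    rw [← EReal.coe_add] at h
    have h1 : x + b = c := by exact_mod_cast h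
    have h2 : x = c - b := by linarith
    exact_mod_cast h2
  | top => simp at h

end GUE

/-- There is a residual (comeagre) subset `ℜ ⊆ C(X)` such that every
`φ ∈ ℜ` has a unique equilibrium state. -/
theorem generic_unique_equilibrium {X : Type*} [MetricSpace X] [CompactSpace X]
    [Nonempty X] [MeasurableSpace X] [BorelSpace X]
    (Γ : C(X, ℝ) → ℝ) (hΓ : IsPressureFunction Γ) :
    ∃ R : Set C(X, ℝ), R ∈ residual C(X, ℝ) ∧
      ∀ φ ∈ R, ∃! μ : ProbabilityMeasure X,
        entropyLike Γ μ + ((∫ x, φ x ∂(μ : Measure X) : ℝ) : EReal) = (Γ φ : EReal) := by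
  obtain ⟨hm, ht, hc⟩ := hΓ
  obtain ⟨u, hu⟩ := TopologicalSpace.exists_dense_seq C(X, ℝ)
  refine ⟨⋂ (n : ℕ) (m : ℕ), GUE.good Γ (u n) (1 / (m + 1)), ?_, ?_⟩
  · refine countable_iInter_mem.2 fun n => countable_iInter_mem.2 fun m => ?_
    exact residual_of_dense_open (GUE.good_isOpen hm ht _ _)
      (GUE.good_dense hm ht _ (by positivity))
  · intro φ hφ
    have hall : ∀ n m : ℕ, φ ∈ GUE.good Γ (u n) (1 / (m + 1)) := fun n m =>
      Set.mem_iInter.1 (Set.mem_iInter.1 hφ n) m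
    set L : C(X, ℝ) → ℝ := GUE.dplus Γ φ with hLdef
    have hadd : ∀ v w, L (v + w) = L v + L w := fun v w =>
      GUE.dplus_add hm ht hc φ v w u hu hall
    have hsmul : ∀ (c : ℝ) v, L (c • v) = c * L v := fun c v =>
      GUE.dplus_smul hm ht hc φ v c u hu hall
    have hpos : ∀ v : C(X, ℝ), (∀ x, 0 ≤ v x) → 0 ≤ L v := fun v hv =>
      GUE.dplus_nonneg hm ht φ v hv
    have hconst : ∀ c : ℝ, L (ContinuousMap.const X c) = c := fun c =>
      GUE.dplus_const ht φ c
    have hneg : ∀ v, L (-v) = -L v := fun v => GUE.dplus_neg hm ht hc φ v u hu hall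
    have hub : ∀ v, L v ≤ Γ (φ + v) - Γ φ := fun v => GUE.dplus_le_sub hm ht φ v
    haveI instP := GUE.rieszMeasure_prob hadd hsmul hpos hconst
    set μ : ProbabilityMeasure X := ⟨GUE.rieszMeasure L hadd hsmul hpos hconst, instP⟩ with hμdef
    have hint : ∀ f : C(X, ℝ), ∫ x, f x ∂(μ : Measure X) = L f := fun f =>
      GUE.riesz_integral hadd hsmul hpos hconst f
    -- characterization of equilibrium states
    have hchar : ∀ ν : ProbabilityMeasure X,
        (entropyLike Γ ν + ((∫ x, φ x ∂(ν : Measure X) : ℝ) : EReal) = (Γ φ : EReal)) ↔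
        (∀ v : C(X, ℝ), ∫ x, v x ∂(ν : Measure X) = L v) := by
      intro ν
      haveI : IsProbabilityMeasure (ν : Measure X) := ν.2
      set Iν : C(X, ℝ) → ℝ := fun v => ∫ x, v x ∂(ν : Measure X) with hIν
      have hIadd : ∀ v w, Iν (v + w) = Iν v + Iν w := by
        intro v w
        show (∫ x, (v + w) x ∂(ν : Measure X)) = _
        simp only [ContinuousMap.add_apply]
        exact integral_add (GUE.cm_integrable _ v) (GUE.cm_integrable _ w)
      have hIconst : ∀ c : ℝ, Iν (ContinuousMap.const X c) = c := by
        intro c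
        show (∫ _, c ∂(ν : Measure X)) = c
        simp [integral_const]
      have hIneg : ∀ v, Iν (-v) = -Iν v := by
        intro v
        show (∫ x, (-v) x ∂(ν : Measure X)) = -(∫ x, v x ∂(ν : Measure X))
        simp only [ContinuousMap.neg_apply]
        exact integral_neg _
      have hIsmul : ∀ (c : ℝ) v, Iν (c • v) = c * Iν v := by
        intro c v
        show (∫ x, (c • v) x ∂(ν : Measure X)) = _
        simp only [ContinuousMap.smul_apply, smul_eq_mul]
        exact integral_const_mul c _
      constructor
      · intro heq
        have hEnt : entropyLike Γ ν = ((Γ φ - Iν φ : ℝ) : EReal) := GUE.ereal_cancel heq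
        have hsubgrad : ∀ ψ : C(X, ℝ), Iν ψ - Iν φ ≤ Γ ψ - Γ φ := by
          intro ψ
          have hg : Γ (-(-ψ + ContinuousMap.const X (Γ ψ))) ≤ 0 := by
            have harg : -(-ψ + ContinuousMap.const X (Γ ψ))
                = ψ + ContinuousMap.const X (-(Γ ψ)) := by ext x; simp; ring
            rw [harg, ht]
            linarith
          have hsle : entropyLike Γ ν
              ≤ ((Iν (-ψ + ContinuousMap.const X (Γ ψ)) : ℝ) : EReal) :=
            sInf_le ⟨-ψ + ContinuousMap.const X (Γ ψ), hg, rfl⟩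
          rw [hEnt] at hsle
          have hsle' : Γ φ - Iν φ ≤ Iν (-ψ + ContinuousMap.const X (Γ ψ)) :=
            EReal.coe_le_coe_iff.1 hsle
          rw [hIadd, hIneg, hIconst] at hsle'
          linarith
        have claim : ∀ w : C(X, ℝ), Iν w ≤ L w := by
          intro w
          apply le_csInf (GUE.slope_nonempty φ w)
          rintro r ⟨δ, hδ, rfl⟩
          have hδ' : (0:ℝ) < δ := hδ
          have hsg := hsubgrad (φ + δ • w)
          rw [hIadd, hIsmul] at hsg
          rw [GUE.slope, le_div_iff₀ hδ']
          have hmc : Iν w * δ = δ * Iν w := mul_comm _ _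
          linarith
        intro v
        have h1 := claim v
        have h2 := claim (-v)
        rw [hIneg, hneg] at h2
        linarith
      · intro hIeq
        have hentS : entropyLike Γ ν = ((Γ φ - Iν φ : ℝ) : EReal) := by
          apply le_antisymm
          · apply sInf_le
            refine ⟨-φ + ContinuousMap.const X (Γ φ), ?_, ?_⟩
            · have harg : -(-φ + ContinuousMap.const X (Γ φ))
                  = φ + ContinuousMap.const X (-(Γ φ)) := by ext x; simp; ring
              rw [harg, ht]
              linarith
            · have hval : Iν (-φ + ContinuousMap.const X (Γ φ)) = Γ φ - Iν φ := by
                rw [hIadd, hIneg, hIconst]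
                ring
              exact_mod_cast hval.symm
          · apply le_sInf
            rintro r ⟨g, hg, rfl⟩
            apply EReal.coe_le_coe_iff.2
            have h2 : Iν (-(g + φ)) = L (-(g + φ)) := hIeq _
            have h3 : L (-(g + φ)) ≤ Γ (φ + -(g + φ)) - Γ φ := hub _
            have harg : φ + -(g + φ) = -g := by module
            rw [harg] at h3
            have h5 := hIadd g φ
            have h6 := hIneg (g + φ)
            linarith
        rw [hentS, ← EReal.coe_add]
        have : (Γ φ - Iν φ) + Iν φ = Γ φ := by ring
        exact_mod_cast this
    refine ⟨μ, (hchar μ).2 hint, ?_⟩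
    intro ν hν
    exact GUE.prob_ext ν μ fun f => by rw [(hchar ν).1 hν f, hint f]
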